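/- For p > 1 and 0 < α < 1 with z > α and γ = (z−α)/(z(1−α)) satisfying γ^p(1−α) < 1, the series Σ_{m ≥ 0} (γ^p (1−α))^m equals z^p(1−α)^{p−1} / (z^p(1−α)^{p−1} − (z−α)^p), and therefore if z = z(α) → ω as α → 0⁺, then f^p α (1−α)^{p−1} / (−(z−α)^p + (1−α)^{p−1} z^p) → f^p / H_p(ω), where H_p(z) = −(p−1)z^p + p z^{p−1}. -/

import Mathlib

open Set Filter

/-- For `p > 1`, `0 < α < 1` and `z > α` with `γ = (z-α)/(z(1-α))` satisfying
`γ^p(1-α) < 1`, the geometric series `Σ_m (γ^p(1-α))^m` equals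
`z^p(1-α)^{p-1} / (z^p(1-α)^{p-1} - (z-α)^p)`; consequently, if `z = z(α) → ω` as
`α → 0⁺` then `f^p α (1-α)^{p-1} / (-(z-α)^p + (1-α)^{p-1} z^p) → f^p / H_p(ω)`,
where `H_p(z) = -(p-1)z^p + p z^{p-1}`. -/
theorem geometric_series_and_limit (p f : ℝ) (hp : 1 < p) (hf : 0 < f)
    (z : ℝ → ℝ) (hz : ∀ α ∈ Ioo (0 : ℝ) 1, 1 < z α)
    (ω : ℝ) (hω1 : 1 ≤ ω) (hωp : ω < p / (p - 1))
    (hlim : Tendsto z (nhdsWithin 0 (Ioi 0)) (nhds ω)) :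
    (∀ α ∈ Ioo (0 : ℝ) 1, ∀ γ : ℝ, γ = (z α - α) / (z α * (1 - α)) →
      γ ^ p * (1 - α) < 1 →
      ∑' m : ℕ, (γ ^ p * (1 - α)) ^ m =
        (z α) ^ p * (1 - α) ^ (p - 1) /
          ((z α) ^ p * (1 - α) ^ (p - 1) - (z α - α) ^ p)) ∧
    Tendsto
      (fun α : ℝ => f ^ p * α * (1 - α) ^ (p - 1) /
        (-(z α - α) ^ p + (1 - α) ^ (p - 1) * (z α) ^ p))
      (nhdsWithin 0 (Ioi 0))
      (nhds (f ^ p / (-(p - 1) * ω ^ p + p * ω ^ (p - 1)))) := by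
  have hω0 : (0 : ℝ) < ω := lt_of_lt_of_le one_pos hω1
  constructor
  · -- geometric series part
    rintro α ⟨hα0, hα1⟩ γ rfl hlt
    have hzα : 1 < z α := hz α ⟨hα0, hα1⟩
    have hz0 : 0 < z α := lt_trans one_pos hzα
    have hzmα : 0 < z α - α := by linarith
    have h1α : 0 < 1 - α := by linarith
    set γ : ℝ := (z α - α) / (z α * (1 - α)) with hγ
    have hγ0 : 0 ≤ γ := by positivity
    have hr0 : 0 ≤ γ ^ p * (1 - α) := by positivity
    rw [tsum_geometric_of_lt_one hr0 hlt]
    have hγp : γ ^ p = (z α - α) ^ p / ((z α) ^ p * (1 - α) ^ p) := by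
      rw [hγ, Real.div_rpow hzmα.le (by positivity),
        Real.mul_rpow hz0.le h1α.le]
    have hpow : (1 - α) ^ p = (1 - α) ^ (p - 1) * (1 - α) := by
      rw [Real.rpow_sub h1α p 1, Real.rpow_one, div_mul_cancel₀ _ h1α.ne']
    have hA : 0 < (z α) ^ p * (1 - α) ^ (p - 1) := by positivity
    have hr : γ ^ p * (1 - α) = (z α - α) ^ p / ((z α) ^ p * (1 - α) ^ (p - 1)) := by
      rw [hγp, hpow]
      field_simp
    rw [hr] at hlt ⊢
    have hBA : (z α - α) ^ p < (z α) ^ p * (1 - α) ^ (p - 1) :=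
      (div_lt_one hA).mp hlt
    rw [one_sub_div hA.ne', inv_div]
  · -- limit part
    have hp1 : 0 < p - 1 := by linarith
    set H : ℝ := -(p - 1) * ω ^ p + p * ω ^ (p - 1) with hH
    have hωpow : ω ^ p = ω ^ (p - 1) * ω := by
      rw [Real.rpow_sub hω0 p 1, Real.rpow_one, div_mul_cancel₀ _ hω0.ne']
    have hHpos : 0 < H := by
      have h1 : H = ω ^ (p - 1) * (p - (p - 1) * ω) := by
        rw [hH, hωpow]; ring
      have h2 : 0 < p - (p - 1) * ω := by
        have := (lt_div_iff₀ hp1).mp hωp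
        linarith
      rw [h1]
      positivity
    -- small α eventually
    have hmem : Ioo (0:ℝ) 1 ∈ nhdsWithin (0:ℝ) (Ioi 0) :=
      Ioo_mem_nhdsGT_of_mem (by constructor <;> norm_num)
    have hα_tendsto : Tendsto (fun α : ℝ => α) (nhdsWithin 0 (Ioi 0)) (nhds 0) :=
      tendsto_id.mono_left nhdsWithin_le_nhds
    -- limit of ((1-α)^(p-1) - 1)/α
    have hderiv : HasDerivAt (fun x : ℝ => (1 - x) ^ (p - 1)) (-(p - 1)) 0 := by
      have h1 : HasDerivAt (fun x : ℝ => 1 - x) (-1) 0 := by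
        simpa using (hasDerivAt_id (0:ℝ)).const_sub 1
      have h2 : HasDerivAt (fun y : ℝ => y ^ (p - 1))
          ((p - 1) * (1:ℝ) ^ (p - 1 - 1)) ((fun x : ℝ => 1 - x) 0) := by
        simpa using Real.hasDerivAt_rpow_const (x := (1:ℝ)) (p := p - 1)
          (Or.inl one_ne_zero)
      have h3 := h2.comp (0:ℝ) h1
      simpa [Real.one_rpow, Function.comp_def] using h3
    have hg : Tendsto (fun α : ℝ => ((1 - α) ^ (p - 1) - 1) / α)
        (nhdsWithin 0 (Ioi 0)) (nhds (-(p - 1))) := by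
      have := hasDerivAt_iff_tendsto_slope.mp hderiv
      have h2 : Tendsto (slope (fun x : ℝ => (1 - x) ^ (p - 1)) 0)
          (nhdsWithin 0 (Ioi 0)) (nhds (-(p - 1))) :=
        this.mono_left (nhdsWithin_mono 0 (fun x hx => ne_of_gt hx))
      refine h2.congr (fun α => ?_)
      simp [slope_def_field, Real.one_rpow]
    -- limit of (z^p - (z-α)^p)/α via squeeze
    have hz_sub : Tendsto (fun α : ℝ => z α - α) (nhdsWithin 0 (Ioi 0)) (nhds ω) := by
      simpa using hlim.sub hα_tendsto
    have hlow : Tendsto (fun α : ℝ => p * (z α - α) ^ (p - 1))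
        (nhdsWithin 0 (Ioi 0)) (nhds (p * ω ^ (p - 1))) :=
      (hz_sub.rpow_const (Or.inl hω0.ne')).const_mul p
    have hup : Tendsto (fun α : ℝ => p * (z α) ^ (p - 1))
        (nhdsWithin 0 (Ioi 0)) (nhds (p * ω ^ (p - 1))) :=
      (hlim.rpow_const (Or.inl hω0.ne')).const_mul p
    have hbounds : ∀ᶠ α in nhdsWithin (0:ℝ) (Ioi 0),
        p * (z α - α) ^ (p - 1) ≤ ((z α) ^ p - (z α - α) ^ p) / α ∧
        ((z α) ^ p - (z α - α) ^ p) / α ≤ p * (z α) ^ (p - 1) := by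
      filter_upwards [hmem] with α hα
      obtain ⟨hα0, hα1⟩ := hα
      have hzα : 1 < z α := hz α ⟨hα0, hα1⟩
      have hz0 : 0 < z α := lt_trans one_pos hzα
      have hzmα : 0 < z α - α := by linarith
      constructor
      · -- lower bound: z^p ≥ (z-α)^p + p α (z-α)^(p-1)
        have key : (z α - α) ^ p + p * α * (z α - α) ^ (p - 1) ≤ (z α) ^ p := by
          have hb := one_add_mul_self_le_rpow_one_add
            (s := α / (z α - α)) (by
              have : (0:ℝ) ≤ α / (z α - α) := by positivity
              linarith) hp.le
          have hrw : (1 + α / (z α - α)) ^ p = (z α) ^ p / (z α - α) ^ p := by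
            rw [show 1 + α / (z α - α) = z α / (z α - α) by field_simp; ring,
              Real.div_rpow hz0.le hzmα.le]
          rw [hrw] at hb
          have hbp : 0 < (z α - α) ^ p := Real.rpow_pos_of_pos hzmα p
          have hb2 : (1 + p * (α / (z α - α))) * (z α - α) ^ p ≤ (z α) ^ p := by
            rw [← le_div_iff₀ hbp]; exact hb
          have hfr : (z α - α) ^ p / (z α - α) = (z α - α) ^ (p - 1) := by
            rw [Real.rpow_sub hzmα p 1, Real.rpow_one]
          calc (z α - α) ^ p + p * α * (z α - α) ^ (p - 1)
              = (1 + p * (α / (z α - α))) * (z α - α) ^ p := by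
                rw [← hfr]; field_simp
            _ ≤ (z α) ^ p := hb2
        rw [le_div_iff₀ hα0]
        nlinarith [key]
      · -- upper bound: (z-α)^p ≥ z^p - p α z^(p-1)
        have key : (z α) ^ p - p * α * (z α) ^ (p - 1) ≤ (z α - α) ^ p := by
          have hb := one_add_mul_self_le_rpow_one_add
            (s := -(α / z α)) (by
              have : α / z α ≤ 1 := by
                rw [div_le_one hz0]; linarith
              linarith) hp.le
          have hrw : (1 + -(α / z α)) ^ p = (z α - α) ^ p / (z α) ^ p := by
            rw [show 1 + -(α / z α) = (z α - α) / z α by field_simp; ring,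
              Real.div_rpow hzmα.le hz0.le]
          rw [hrw] at hb
          have hbp : 0 < (z α) ^ p := Real.rpow_pos_of_pos hz0 p
          have hb2 : (1 + p * -(α / z α)) * (z α) ^ p ≤ (z α - α) ^ p := by
            rw [← le_div_iff₀ hbp]; exact hb
          have hfr : (z α) ^ p / z α = (z α) ^ (p - 1) := by
            rw [Real.rpow_sub hz0 p 1, Real.rpow_one]
          calc (z α) ^ p - p * α * (z α) ^ (p - 1)
              = (1 + p * -(α / z α)) * (z α) ^ p := by
                rw [← hfr]; field_simp; ring
            _ ≤ (z α - α) ^ p := hb2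
        rw [div_le_iff₀ hα0]
        nlinarith [key]
    have hh : Tendsto (fun α : ℝ => ((z α) ^ p - (z α - α) ^ p) / α)
        (nhdsWithin 0 (Ioi 0)) (nhds (p * ω ^ (p - 1))) :=
      tendsto_of_tendsto_of_tendsto_of_le_of_le' hlow hup
        (hbounds.mono fun α h => h.1) (hbounds.mono fun α h => h.2)
    -- limit of D/α
    have hzp : Tendsto (fun α : ℝ => (z α) ^ p)
        (nhdsWithin 0 (Ioi 0)) (nhds (ω ^ p)) :=
      hlim.rpow_const (Or.inl hω0.ne')
    have hD : Tendsto (fun α : ℝ =>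
        (-(z α - α) ^ p + (1 - α) ^ (p - 1) * (z α) ^ p) / α)
        (nhdsWithin 0 (Ioi 0)) (nhds H) := by
      have hsum : Tendsto (fun α : ℝ =>
          (z α) ^ p * (((1 - α) ^ (p - 1) - 1) / α) +
          ((z α) ^ p - (z α - α) ^ p) / α)
          (nhdsWithin 0 (Ioi 0))
          (nhds (ω ^ p * (-(p - 1)) + p * ω ^ (p - 1))) :=
        (hzp.mul hg).add hh
      have heq : (ω ^ p * (-(p - 1)) + p * ω ^ (p - 1)) = H := by rw [hH]; ring
      rw [heq] at hsum
      refine hsum.congr (fun α => ?_)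
      rw [mul_div_assoc'] at *
      rw [← add_div]
      ring_nf
    -- numerator limit
    have hnum : Tendsto (fun α : ℝ => f ^ p * (1 - α) ^ (p - 1))
        (nhdsWithin 0 (Ioi 0)) (nhds (f ^ p * 1)) := by
      have h1 : Tendsto (fun α : ℝ => (1 : ℝ) - α) (nhdsWithin 0 (Ioi 0)) (nhds 1) := by
        simpa using (tendsto_const_nhds (x := (1:ℝ))).sub hα_tendsto
      have h2 : Tendsto (fun α : ℝ => (1 - α) ^ (p - 1)) (nhdsWithin 0 (Ioi 0))
          (nhds ((1:ℝ) ^ (p - 1))) := h1.rpow_const (Or.inl one_ne_zero)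
      have := h2.const_mul (f ^ p)
      simpa using this
    have := hnum.div hD hHpos.ne'
    rw [mul_one] at this
    refine this.congr (fun α => ?_)
    simp only [Pi.div_apply]
    rw [div_div_eq_mul_div]
    ring
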